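/- Let W_1, W_2, W_3, W_4 be finite-dimensional subspaces of a vector space and let S_{i→j} ≤ W_i for 1 ≤ i < j ≤ 4. Define W_5 to be any subspace containing W_j ∩ (W_{j+1}+...+W_4) for j = 1, 2, 3. Then h(S_{i→j} | W_5) ≤ h(S_{i→j} | W_{i+1}+...+W_4) for all 1 ≤ i < j ≤ 4, where h(A|B) = dim(A+B) − dim(B); moreover if W_5 is exactly the span of the three intersections, dim(W_5) ≤ Σ_{j=1}^{4} dim(W_j) − dim(W_1+W_2+W_3+W_4). -/
import Mathlib


open Module Finset

/-- Conditional dimension: `h(A|B) = dim(A+B) - dim(B)`. -/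
noncomputable def condDim {F V : Type*} [Field F] [AddCommGroup V] [Module F V]
    (A B : Submodule F V) : ℤ :=
  (finrank F ↥(A ⊔ B) : ℤ) - (finrank F ↥B : ℤ)

lemma condDim_eq' {F V : Type*} [Field F] [AddCommGroup V] [Module F V]
    (A B : Submodule F V) [FiniteDimensional F ↥A] [FiniteDimensional F ↥B] :
    condDim A B = (finrank F ↥A : ℤ) - (finrank F ↥(A ⊓ B) : ℤ) := by
  have h := Submodule.finrank_sup_add_finrank_inf_eq A B
  unfold condDim
  omega

lemma finrank_sup_le' {F V : Type*} [Field F] [AddCommGroup V] [Module F V]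
    (A B : Submodule F V) [FiniteDimensional F ↥A] [FiniteDimensional F ↥B] :
    finrank F ↥(A ⊔ B) ≤ finrank F ↥A + finrank F ↥B := by
  have h := Submodule.finrank_sup_add_finrank_inf_eq A B
  omega

/-- the virtual node `W_5` for the `(4,3,3)` bound:
any `W_5` containing `W_j ∩ W_[j+1,4]` for `j = 1,2,3` satisfies
`h(S_{i→j} | W_5) ≤ h(S_{i→j} | W_[i+1,4])`, and if `W_5` is exactly the span of
the three intersections then `dim W_5 ≤ Σ_j dim W_j − dim(W_1+W_2+W_3+W_4)`. -/
theorem stmt15 {F V : Type*} [Field F] [AddCommGroup V] [Module F V]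
    (W : ℕ → Submodule F V) (S : ℕ → ℕ → Submodule F V)
    (hfdW : ∀ i, FiniteDimensional F ↥(W i)) (hfdS : ∀ i j, FiniteDimensional F ↥(S i j))
    (hSW : ∀ i j, 1 ≤ i → i < j → j ≤ 4 → S i j ≤ W i)
    (W5 : Submodule F V) [FiniteDimensional F ↥W5]
    (hW5 : ∀ j, 1 ≤ j → j ≤ 3 → W j ⊓ (Finset.Icc (j+1) 4).sup W ≤ W5) :
    (∀ i j, 1 ≤ i → i < j → j ≤ 4 →
      condDim (S i j) W5 ≤ condDim (S i j) ((Finset.Icc (i+1) 4).sup W))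
    ∧ (W5 = (Finset.Icc 1 3).sup (fun j => W j ⊓ (Finset.Icc (j+1) 4).sup W) →
        (finrank F ↥W5 : ℤ)
          ≤ (∑ j ∈ Finset.Icc 1 4, (finrank F ↥(W j) : ℤ))
            - (finrank F ↥(W 1 ⊔ W 2 ⊔ W 3 ⊔ W 4) : ℤ)) := by
  haveI := hfdW
  haveI := hfdS
  constructor
  · intro i j hi hij hj
    haveI : FiniteDimensional F ↥((Finset.Icc (i+1) 4).sup W) :=
      Submodule.finiteDimensional_finset_sup _ _
    rw [condDim_eq', condDim_eq']
    have hle : S i j ⊓ (Finset.Icc (i+1) 4).sup W ≤ S i j ⊓ W5 := by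
      refine le_inf inf_le_left ?_
      calc S i j ⊓ (Finset.Icc (i+1) 4).sup W
          ≤ W i ⊓ (Finset.Icc (i+1) 4).sup W :=
            inf_le_inf_right _ (hSW i j hi hij hj)
        _ ≤ W5 := hW5 i hi (by omega)
    have := Submodule.finrank_mono hle
    omega
  · intro hW5eq
    have e1 : (Finset.Icc 2 4 : Finset ℕ) = {2, 3, 4} := by decide
    have e2 : (Finset.Icc 3 4 : Finset ℕ) = {3, 4} := by decide
    have e3 : (Finset.Icc 4 4 : Finset ℕ) = {4} := by decide
    have e0 : (Finset.Icc 1 3 : Finset ℕ) = {1, 2, 3} := by decide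
    have hB1 : (Finset.Icc 2 4).sup W = W 2 ⊔ (W 3 ⊔ W 4) := by
      rw [e1]; simp [Finset.sup_insert]
    have hB2 : (Finset.Icc 3 4).sup W = W 3 ⊔ W 4 := by
      rw [e2]; simp [Finset.sup_insert]
    have hB3 : (Finset.Icc 4 4).sup W = W 4 := by
      rw [e3]; exact Finset.sup_singleton
    rw [hW5eq, e0]
    rw [Finset.sup_insert, Finset.sup_insert, Finset.sup_singleton]
    norm_num
    rw [hB1, hB2, hB3]
    have h1 := Submodule.finrank_sup_add_finrank_inf_eq (W 1) (W 2 ⊔ (W 3 ⊔ W 4))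
    have h2 := Submodule.finrank_sup_add_finrank_inf_eq (W 2) (W 3 ⊔ W 4)
    have h3 := Submodule.finrank_sup_add_finrank_inf_eq (W 3) (W 4)
    have hsum : ∑ j ∈ Finset.Icc 1 4, (finrank F ↥(W j) : ℤ)
        = (finrank F ↥(W 1) : ℤ) + finrank F ↥(W 2) + finrank F ↥(W 3) + finrank F ↥(W 4) := by
      have : (Finset.Icc 1 4 : Finset ℕ) = {1, 2, 3, 4} := by decide
      rw [this]
      simp [Finset.sum_insert]
      ring
    have hWtot : W 1 ⊔ W 2 ⊔ W 3 ⊔ W 4 = W 1 ⊔ (W 2 ⊔ (W 3 ⊔ W 4)) := by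
      simp [sup_assoc]
    rw [hsum, hWtot]
    have hsup1 := finrank_sup_le' (W 1 ⊓ (W 2 ⊔ (W 3 ⊔ W 4))) ((W 2 ⊓ (W 3 ⊔ W 4)) ⊔ (W 3 ⊓ W 4))
    have hsup2 := finrank_sup_le' (W 2 ⊓ (W 3 ⊔ W 4)) (W 3 ⊓ W 4)
    omega
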